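/- Let K ≥ 4 be an even integer and let Q_K be the square 2^K-ary QAM constellation. Suppose Y is a set of complex numbers such that, with X = {1, −1, i, −i}, the pair (X, Y) is a uniquely factorable constellation pair and {y/x : x ∈ X, y ∈ Y} = Q_K. Then there exist distinct y, y' ∈ Y with |y − y'| ≤ 4. -/

import Mathlib

/-- A pair `(X, Y)` of sets of complex numbers is a uniquely factorable
constellation pair (UFCP) if `x * y' = x' * y` with `x, x' ∈ X` and
`y, y' ∈ Y` implies `x = x'` and `y = y'`. -/
def IsUFCP (X Y : Set ℂ) : Prop :=
  ∀ x ∈ X, ∀ x' ∈ X, ∀ y ∈ Y, ∀ y' ∈ Y, x * y' = x' * y → x = x' ∧ y = y'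

/-- The square `2^K`-ary QAM constellation (for even `K ≥ 2`). -/
def sqQAM (K : ℕ) : Set ℂ :=
  {z | ∃ m n : ℤ, -(2 : ℤ) ^ ((K - 2) / 2) + 1 ≤ m ∧ m ≤ (2 : ℤ) ^ ((K - 2) / 2) ∧
    -(2 : ℤ) ^ ((K - 2) / 2) + 1 ≤ n ∧ n ≤ (2 : ℤ) ^ ((K - 2) / 2) ∧
    z = (2 * (m : ℂ) - 1) + (2 * (n : ℂ) - 1) * Complex.I}

lemma abs_le_four {z : ℂ} (h : Complex.normSq z ≤ 16) : ‖z‖ ≤ 4 := by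
  rw [Complex.norm_def]
  have h0 := Complex.normSq_nonneg z
  nlinarith [Real.sq_sqrt h0, Real.sqrt_nonneg (Complex.normSq z)]

lemma pair_good {Y : Set ℂ} {a b : ℂ} (ha : a ∈ Y) (hb : b ∈ Y)
    (h : 0 < Complex.normSq (a - b)) (h2 : Complex.normSq (a - b) ≤ 16) :
    ∃ y ∈ Y, ∃ y' ∈ Y, y ≠ y' ∧ ‖y - y'‖ ≤ 4 :=
  ⟨a, ha, b, hb, fun he => by simp [he] at h, abs_le_four h2⟩

/-- If `(X, Y)` with `X = {1, -1, i, -i}` is a UFCP factorizing the square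
`2^K`-ary QAM constellation (`K ≥ 4` even), then `Y` contains two distinct
points at distance at most `4`. -/
theorem sqQAM_four_min_dist_upper_bound (K : ℕ) (hK4 : 4 ≤ K) (hKeven : K % 2 = 0)
    (Y : Set ℂ)
    (hufcp : IsUFCP ({1, -1, Complex.I, -Complex.I} : Set ℂ) Y)
    (hfact : {w : ℂ | ∃ x ∈ ({1, -1, Complex.I, -Complex.I} : Set ℂ),
        ∃ y ∈ Y, w = y / x} = sqQAM K) :
    ∃ y ∈ Y, ∃ y' ∈ Y, y ≠ y' ∧ ‖y - y'‖ ≤ 4 := by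
  have h1 : (1 : ℤ) ≤ 2 ^ ((K - 2) / 2) := one_le_pow₀ (by norm_num)
  have h2 : (2 : ℤ) ≤ 2 ^ ((K - 2) / 2) := by
    calc (2 : ℤ) = 2 ^ 1 := by norm_num
    _ ≤ 2 ^ ((K - 2) / 2) := by
        apply pow_le_pow_right₀ (by norm_num); omega
  have hmem : ∀ z ∈ sqQAM K, ∃ x ∈ ({1, -1, Complex.I, -Complex.I} : Set ℂ),
      ∃ y ∈ Y, y = z * x := by
    intro z hz
    rw [← hfact] at hz
    obtain ⟨x, hx, y, hy, hzy⟩ := hz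
    refine ⟨x, hx, y, hy, ?_⟩
    have hx0 : x ≠ 0 := by
      rcases hx with rfl | rfl | rfl | rfl
      · norm_num
      · norm_num
      · exact Complex.I_ne_zero
      · simp [Complex.I_ne_zero]
    rw [hzy, div_mul_cancel₀ _ hx0]
  have hq1 : (1 + Complex.I) ∈ sqQAM K := ⟨1, 1, by omega, h1, by omega, h1, by
    push_cast; ring⟩
  have hq2 : (3 + Complex.I) ∈ sqQAM K := ⟨2, 1, by omega, h2, by omega, h1, by
    push_cast; ring⟩
  have hq3 : (1 + 3 * Complex.I) ∈ sqQAM K := ⟨1, 2, by omega, h1, by omega, h2, by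
    push_cast; ring⟩
  obtain ⟨x1, hx1, y1, hy1Y, hy1⟩ := hmem _ hq1
  obtain ⟨x2, hx2, y2, hy2Y, hy2⟩ := hmem _ hq2
  obtain ⟨x3, hx3, y3, hy3Y, hy3⟩ := hmem _ hq3
  subst hy1; subst hy2; subst hy3
  simp only [Set.mem_insert_iff, Set.mem_singleton_iff] at hx1 hx2 hx3
  rcases hx1 with rfl | rfl | rfl | rfl <;>
  rcases hx2 with rfl | rfl | rfl | rfl <;>
  rcases hx3 with rfl | rfl | rfl | rfl <;>
  first
    | (refine pair_good hy1Y hy2Y ?_ ?_ <;>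
        (norm_num [Complex.normSq_apply, Complex.mul_re, Complex.mul_im]; done))
    | (refine pair_good hy1Y hy3Y ?_ ?_ <;>
        (norm_num [Complex.normSq_apply, Complex.mul_re, Complex.mul_im]; done))
    | (refine pair_good hy2Y hy3Y ?_ ?_ <;>
        (norm_num [Complex.normSq_apply, Complex.mul_re, Complex.mul_im]; done))
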